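/- There exist a finite LPTS L and a finite reactive LPTS R with L ⋠ R such that no reactive LPTS is a counterexample, i.e. every reactive C with C ≼ L also satisfies C ≼ R. -/

import Mathlib

open Classical

structure FDist (S : Type) [Fintype S] where
  pmf : S → ℝ
  nonneg : ∀ s, 0 ≤ pmf s
  sum_one : ∑ s, pmf s = 1

namespace FDist

variable {S S1 S2 : Type} [Fintype S] [Fintype S1] [Fintype S2]

noncomputable def prob (μ : FDist S) (T : Set S) : ℝ :=
  ∑ s, if s ∈ T then μ.pmf s else 0

def supp (μ : FDist S) : Set S := {s | 0 < μ.pmf s}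

noncomputable def dirac (s : S) : FDist S where
  pmf t := if t = s then 1 else 0
  nonneg t := by (try dsimp only); split <;> norm_num
  sum_one := by simp

noncomputable def prod (μ1 : FDist S1) (μ2 : FDist S2) : FDist (S1 × S2) where
  pmf p := μ1.pmf p.1 * μ2.pmf p.2
  nonneg p := mul_nonneg (μ1.nonneg _) (μ2.nonneg _)
  sum_one := by
    rw [Fintype.sum_prod_type]
    simp_rw [← Finset.mul_sum, μ2.sum_one, mul_one]
    exact μ1.sum_one

end FDist

/-- Image of a set under a relation: `R(T) = {s2 | ∃ s1 ∈ T, (s1,s2) ∈ R}`. -/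
def relImage {S1 S2 : Type} (R : Set (S1 × S2)) (T : Set S1) : Set S2 :=
  {s2 | ∃ s1 ∈ T, (s1, s2) ∈ R}

/-- The lifting `μ1 ⊑_R μ2` of a relation on states to distributions,
via the Hall-type subset condition. -/
def liftRel {S1 S2 : Type} [Fintype S1] [Fintype S2]
    (R : Set (S1 × S2)) (μ1 : FDist S1) (μ2 : FDist S2) : Prop :=
  ∀ T ⊆ μ1.supp, μ1.prob T ≤ μ2.prob (relImage R T)

/-- A (finite, finitely-branching) labeled probabilistic transition system. -/
structure LPTS (S : Type) (Act : Type) [Fintype S] where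
  start : S
  alpha : Set Act
  trans : S → Act → Set (FDist S)
  trans_mem : ∀ s a μ, μ ∈ trans s a → a ∈ alpha
  finite_trans : ∀ s a, (trans s a).Finite

/-- `R` is a strong simulation between `L1` and `L2`. -/
def StrongSim {S1 S2 Act : Type} [Fintype S1] [Fintype S2]
    (L1 : LPTS S1 Act) (L2 : LPTS S2 Act) (R : Set (S1 × S2)) : Prop :=
  ∀ s1 s2, (s1, s2) ∈ R → ∀ a μ1, μ1 ∈ L1.trans s1 a →
    ∃ μ2 ∈ L2.trans s2 a, liftRel R μ1 μ2

/-- `L2` strongly simulates `L1` (written `L1 ≼ L2`). -/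
def Sim {S1 S2 Act : Type} [Fintype S1] [Fintype S2]
    (L1 : LPTS S1 Act) (L2 : LPTS S2 Act) : Prop :=
  ∃ R, StrongSim L1 L2 R ∧ (L1.start, L2.start) ∈ R

/-- Reactive: at most one transition per state and action. -/
def Reactive {S Act : Type} [Fintype S] (L : LPTS S Act) : Prop :=
  ∀ s a, (L.trans s a).Subsingleton

/-- Fully probabilistic: at most one transition per state. -/
def FullyProbabilistic {S Act : Type} [Fintype S] (L : LPTS S Act) : Prop :=
  ∀ s, {p : Act × FDist S | p.2 ∈ L.trans s p.1}.Subsingleton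

set_option linter.unusedSectionVars false
set_option linter.unreachableTactic false
set_option linter.unusedTactic false
section Construction

variable {S S1 S2 : Type} [Fintype S] [Fintype S1] [Fintype S2]

lemma prob_nonneg (μ : FDist S) (T : Set S) : 0 ≤ μ.prob T :=
  Finset.sum_nonneg (fun s _ => by by_cases h : s ∈ T <;> simp [FDist.prob, h, μ.nonneg s])

lemma prob_le_one (μ : FDist S) (T : Set S) : μ.prob T ≤ 1 := by
  rw [← μ.sum_one]
  exact Finset.sum_le_sum (fun s _ => by by_cases h : s ∈ T <;> simp [h, μ.nonneg s])

lemma prob_singleton (μ : FDist S) (s : S) : μ.prob {s} = μ.pmf s := by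
  rw [FDist.prob]
  simp only [Set.mem_singleton_iff]
  simp

lemma dirac_prob (s : S) (T : Set S) :
    (FDist.dirac s).prob T = if s ∈ T then 1 else 0 := by
  rw [FDist.prob]
  rw [Finset.sum_congr rfl (fun t _ => show (if t ∈ T then (FDist.dirac s).pmf t else 0)
      = if t = s then (if t ∈ T then 1 else 0) else 0 by
        by_cases h1 : t ∈ T <;> by_cases h2 : t = s <;> simp [FDist.dirac, h1, h2])]
  simp_rw [Finset.sum_ite_eq' Finset.univ s (fun t => if t ∈ T then (1:ℝ) else 0)]
  simp

lemma mem_relImage_singleton {Q : Set (S1 × S2)} {s1 : S1} {s2 : S2} :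
    s2 ∈ relImage Q {s1} ↔ (s1, s2) ∈ Q := by
  simp [relImage]

lemma liftRel_single {Q : Set (S1 × S2)} {μ1 : FDist S1} {μ2 : FDist S2}
    (h : liftRel Q μ1 μ2) {s : S1} (hs : 0 < μ1.pmf s) :
    μ1.pmf s ≤ μ2.prob (relImage Q {s}) := by
  have := h {s} (by intro t ht; rw [Set.mem_singleton_iff] at ht; subst ht; exact hs)
  rwa [prob_singleton] at this

lemma liftRel_dirac_mono {Q : Set (S1 × S2)} {Q' : Set (S1 × S2)} {γ : FDist S1}
    {s s' : S2} (h : liftRel Q γ (FDist.dirac s))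
    (hQQ' : ∀ c, (c, s) ∈ Q → (c, s') ∈ Q') : liftRel Q' γ (FDist.dirac s') := by
  intro T hT
  have h2 := h T hT
  rw [dirac_prob] at h2 ⊢
  by_cases hm : s ∈ relImage Q T
  · obtain ⟨c, hcT, hc⟩ := hm
    have : s' ∈ relImage Q' T := ⟨c, hcT, hQQ' c hc⟩
    rw [if_pos this]
    exact prob_le_one γ T
  · rw [if_neg hm] at h2
    refine h2.trans ?_
    positivity

noncomputable def μhalf : FDist (Fin 5) where
  pmf s := if s = 1 then 1/2 else if s = 2 then 1/2 else 0
  nonneg s := by (try dsimp only); split <;> norm_num; split <;> norm_num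
  sum_one := by rw [Fin.sum_univ_five]; simp only [show ((0:Fin 5) ≠ 1) from by decide, show ((0:Fin 5) ≠ 2) from by decide, show ((3:Fin 5) ≠ 1) from by decide, show ((3:Fin 5) ≠ 2) from by decide, show ((4:Fin 5) ≠ 1) from by decide, show ((4:Fin 5) ≠ 2) from by decide, show ((1:Fin 5) ≠ 2) from by decide, if_true, if_false]; norm_num

lemma μhalf_pmf_one : μhalf.pmf 1 = 1/2 := by simp [μhalf]

lemma μhalf_prob (T : Set (Fin 5)) :
    μhalf.prob T = (if (1 : Fin 5) ∈ T then (1/2 : ℝ) else 0)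
      + (if (2 : Fin 5) ∈ T then (1/2 : ℝ) else 0) := by
  rw [FDist.prob, Fin.sum_univ_five]
  have h0 : μhalf.pmf 0 = 0 := by simp [μhalf]
  have h1 : μhalf.pmf 1 = 1/2 := by simp [μhalf]
  have h2 : μhalf.pmf 2 = 1/2 := by simp [μhalf]
  have h3 : μhalf.pmf 3 = 0 := by simp [μhalf]
  have h4 : μhalf.pmf 4 = 0 := by simp [μhalf]
  rw [h0, h1, h2, h3, h4]
  simp

def Ltrans (s : Fin 5) (a : Fin 4) : Set (FDist (Fin 5)) :=
  if s = 0 ∧ a = 0 then {μhalf}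
  else if s = 1 ∧ a = 1 then {FDist.dirac 3, FDist.dirac 4}
  else if s = 3 ∧ a = 2 then {FDist.dirac 3}
  else if s = 4 ∧ a = 3 then {FDist.dirac 4}
  else ∅

def Rtrans (s : Fin 5) (a : Fin 4) : Set (FDist (Fin 5)) :=
  if s = 0 ∧ a = 0 then {μhalf}
  else if s = 1 ∧ a = 1 then {FDist.dirac 3}
  else if s = 2 ∧ a = 1 then {FDist.dirac 4}
  else if s = 3 ∧ a = 2 then {FDist.dirac 3}
  else if s = 4 ∧ a = 3 then {FDist.dirac 4}
  else ∅

noncomputable def Lsys : LPTS (Fin 5) (Fin 4) where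
  start := 0
  alpha := Set.univ
  trans := Ltrans
  trans_mem := fun _ a _ _ => Set.mem_univ a
  finite_trans := by
    intro s a
    unfold Ltrans
    split_ifs <;>
      first
        | exact Set.finite_empty
        | exact Set.finite_singleton _
        | exact (Set.finite_singleton _).insert _

noncomputable def Rsys : LPTS (Fin 5) (Fin 4) where
  start := 0
  alpha := Set.univ
  trans := Rtrans
  trans_mem := fun _ a _ _ => Set.mem_univ a
  finite_trans := by
    intro s a
    unfold Rtrans
    split_ifs <;>
      first
        | exact Set.finite_empty
        | exact Set.finite_singleton _
        | exact (Set.finite_singleton _).insert _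

end Construction
section Facts

lemma Ltrans0 (a : Fin 4) (μ : FDist (Fin 5)) (h : μ ∈ Ltrans 0 a) :
    a = 0 ∧ μ = μhalf := by
  fin_cases a <;> simp_all [Ltrans]

lemma Ltrans1 (a : Fin 4) (μ : FDist (Fin 5)) (h : μ ∈ Ltrans 1 a) :
    a = 1 ∧ (μ = FDist.dirac 3 ∨ μ = FDist.dirac 4) := by
  fin_cases a <;> simp_all [Ltrans]

lemma Ltrans2 (a : Fin 4) : Ltrans 2 a = ∅ := by
  fin_cases a <;> simp [Ltrans]

lemma Ltrans3 (a : Fin 4) (μ : FDist (Fin 5)) (h : μ ∈ Ltrans 3 a) :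
    a = 2 ∧ μ = FDist.dirac 3 := by
  fin_cases a <;> simp_all [Ltrans]

lemma Ltrans4 (a : Fin 4) (μ : FDist (Fin 5)) (h : μ ∈ Ltrans 4 a) :
    a = 3 ∧ μ = FDist.dirac 4 := by
  fin_cases a <;> simp_all [Ltrans]

lemma Lmem_x : μhalf ∈ Ltrans 0 0 := by simp [Ltrans]
lemma Lmem_y3 : FDist.dirac 3 ∈ Ltrans 1 1 := by simp [Ltrans]
lemma Lmem_y4 : FDist.dirac 4 ∈ Ltrans 1 1 := by simp [Ltrans]
lemma Lmem_z : FDist.dirac 3 ∈ Ltrans 3 2 := by simp [Ltrans]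
lemma Lmem_w : FDist.dirac 4 ∈ Ltrans 4 3 := by simp [Ltrans]

lemma Rmem_x : μhalf ∈ Rtrans 0 0 := by simp [Rtrans]
lemma Rmem_y3 : FDist.dirac 3 ∈ Rtrans 1 1 := by simp [Rtrans]
lemma Rmem_y4 : FDist.dirac 4 ∈ Rtrans 2 1 := by simp [Rtrans]
lemma Rmem_z : FDist.dirac 3 ∈ Rtrans 3 2 := by simp [Rtrans]
lemma Rmem_w : FDist.dirac 4 ∈ Rtrans 4 3 := by simp [Rtrans]

lemma Rtrans00 : Rtrans 0 0 = {μhalf} := by simp [Rtrans]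
lemma Rtrans11 : Rtrans 1 1 = {FDist.dirac 3} := by simp [Rtrans]
lemma Rtrans21 : Rtrans 2 1 = {FDist.dirac 4} := by simp [Rtrans]
lemma Rtrans33 : Rtrans 3 3 = ∅ := by simp [Rtrans]
lemma Rtrans42 : Rtrans 4 2 = ∅ := by simp [Rtrans]

lemma Rsys_reactive : Reactive Rsys := by
  intro s a
  show (Rtrans s a).Subsingleton
  unfold Rtrans
  split_ifs <;> first
    | exact Set.subsingleton_empty
    | exact Set.subsingleton_singleton

end Facts
lemma not_sim : ¬ Sim Lsys Rsys := by
  rintro ⟨Q, hQ, h0⟩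
  have c1 : ((1:Fin 5), (1:Fin 5)) ∉ Q := by
    intro h
    obtain ⟨μ2, hμ2, hlift⟩ := hQ 1 1 h 1 (FDist.dirac 4) Lmem_y4
    have hμ2' : μ2 ∈ Rtrans 1 1 := hμ2
    rw [Rtrans11, Set.mem_singleton_iff] at hμ2'
    subst hμ2'
    have h4 : (0:ℝ) < (FDist.dirac (4 : Fin 5)).pmf 4 := by simp [FDist.dirac]
    have hle := liftRel_single hlift h4
    rw [dirac_prob] at hle
    have hp : (FDist.dirac (4:Fin 5)).pmf 4 = 1 := by simp [FDist.dirac]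
    rw [hp] at hle
    by_cases hm : (3:Fin 5) ∈ relImage Q {4}
    · rw [mem_relImage_singleton] at hm
      obtain ⟨μ3, hμ3, -⟩ := hQ 4 3 hm 3 (FDist.dirac 4) Lmem_w
      have hμ3' : μ3 ∈ Rtrans 3 3 := hμ3
      rw [Rtrans33] at hμ3'
      exact hμ3'
    · rw [if_neg hm] at hle; linarith
  have c2 : ((1:Fin 5), (2:Fin 5)) ∉ Q := by
    intro h
    obtain ⟨μ2, hμ2, hlift⟩ := hQ 1 2 h 1 (FDist.dirac 3) Lmem_y3
    have hμ2' : μ2 ∈ Rtrans 2 1 := hμ2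
    rw [Rtrans21, Set.mem_singleton_iff] at hμ2'
    subst hμ2'
    have h3 : (0:ℝ) < (FDist.dirac (3 : Fin 5)).pmf 3 := by simp [FDist.dirac]
    have hle := liftRel_single hlift h3
    rw [dirac_prob] at hle
    have hp : (FDist.dirac (3:Fin 5)).pmf 3 = 1 := by simp [FDist.dirac]
    rw [hp] at hle
    by_cases hm : (4:Fin 5) ∈ relImage Q {3}
    · rw [mem_relImage_singleton] at hm
      obtain ⟨μ3, hμ3, -⟩ := hQ 3 4 hm 2 (FDist.dirac 3) Lmem_z
      have hμ3' : μ3 ∈ Rtrans 4 2 := hμ3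
      rw [Rtrans42] at hμ3'
      exact hμ3'
    · rw [if_neg hm] at hle; linarith
  obtain ⟨μ2, hμ2, hlift⟩ := hQ 0 0 h0 0 μhalf Lmem_x
  have hμ2' : μ2 ∈ Rtrans 0 0 := hμ2
  rw [Rtrans00, Set.mem_singleton_iff] at hμ2'
  subst hμ2'
  have hle := liftRel_single hlift (show (0:ℝ) < μhalf.pmf 1 by rw [μhalf_pmf_one]; norm_num)
  rw [μhalf_pmf_one, μhalf_prob] at hle
  have e1 : (1:Fin 5) ∉ relImage Q {1} := fun hm => c1 (mem_relImage_singleton.mp hm)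
  have e2 : (2:Fin 5) ∉ relImage Q {1} := fun hm => c2 (mem_relImage_singleton.mp hm)
  rw [if_neg e1, if_neg e2] at hle
  linarith
lemma prob_empty {S : Type} [Fintype S] (μ : FDist S) : μ.prob (∅ : Set S) = 0 := by
  simp [FDist.prob]

/-- The simulation relation from a reactive `C` (simulated by `L` via `Q`) to `R`. -/
def QR {T : Type} [Fintype T] (C : LPTS T (Fin 4)) (Q : Set (T × Fin 5)) : Set (T × Fin 5) :=
  {p | (p.2 = 0 ∧ (p.1, 0) ∈ Q)
    ∨ (p.2 = 1 ∧ (((p.1, 1) ∈ Q ∧ ∀ γ ∈ C.trans p.1 1, liftRel Q γ (FDist.dirac 3))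
          ∨ (p.1, 2) ∈ Q))
    ∨ (p.2 = 2 ∧ (((p.1, 1) ∈ Q ∧ ∀ γ ∈ C.trans p.1 1, liftRel Q γ (FDist.dirac 4))
          ∨ (p.1, 2) ∈ Q))
    ∨ (p.2 = 3 ∧ (p.1, 3) ∈ Q)
    ∨ (p.2 = 4 ∧ (p.1, 4) ∈ Q)}

lemma reactive_sim {T : Type} [Fintype T] (C : LPTS T (Fin 4)) (hre : Reactive C)
    (hsim : Sim C Lsys) : Sim C Rsys := by
  classical
  obtain ⟨Q, hQ, hc0⟩ := hsim
  refine ⟨QR C Q, ?_, Or.inl ⟨rfl, hc0⟩⟩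
  rintro c r hcr a γ hγ
  obtain (⟨hr, hc⟩ | ⟨hr, hc⟩ | ⟨hr, hc⟩ | ⟨hr, hc⟩ | ⟨hr, hc⟩) := hcr <;> subst hr
  · -- r = 0
    obtain ⟨μ2, hμ2, hlift⟩ := hQ c 0 hc a γ hγ
    obtain ⟨ha, hμ⟩ := Ltrans0 a μ2 hμ2
    subst ha; subst hμ
    refine ⟨μhalf, Rmem_x, ?_⟩
    intro T' hT'
    have helem : ∀ c' ∈ T', (c', (1 : Fin 5)) ∈ Q ∨ (c', (2 : Fin 5)) ∈ Q := by
      intro c' hc'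
      have hpos : 0 < γ.pmf c' := hT' hc'
      have hle := liftRel_single hlift hpos
      rw [μhalf_prob] at hle
      by_contra hcon
      push_neg at hcon
      rw [if_neg (fun hm => hcon.1 (mem_relImage_singleton.mp hm)),
          if_neg (fun hm => hcon.2 (mem_relImage_singleton.mp hm))] at hle
      linarith
    have himg : ∀ c' ∈ T',
        (c', (1 : Fin 5)) ∈ QR C Q ∨ (c', (2 : Fin 5)) ∈ QR C Q := by
      intro c' hc'
      rcases helem c' hc' with h1 | h2
      · have hcz : (∀ γ' ∈ C.trans c' 1, liftRel Q γ' (FDist.dirac (3 : Fin 5)))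
            ∨ (∀ γ' ∈ C.trans c' 1, liftRel Q γ' (FDist.dirac (4 : Fin 5))) := by
          rcases Set.eq_empty_or_nonempty (C.trans c' 1) with he | ⟨γ0, hγ0⟩
          · left; intro γ' hγ'; rw [he] at hγ'; exact absurd hγ' (Set.notMem_empty _)
          · obtain ⟨μ2', hμ2', hl2⟩ := hQ c' 1 h1 1 γ0 hγ0
            obtain ⟨-, hd⟩ := Ltrans1 1 μ2' hμ2'
            rcases hd with hd | hd
            · left; intro γ' hγ'; rw [hre c' 1 hγ' hγ0]; rw [hd] at hl2; exact hl2
            · right; intro γ' hγ'; rw [hre c' 1 hγ' hγ0]; rw [hd] at hl2; exact hl2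
        rcases hcz with h | h
        · exact Or.inl (Or.inr (Or.inl ⟨rfl, Or.inl ⟨h1, h⟩⟩))
        · exact Or.inr (Or.inr (Or.inr (Or.inl ⟨rfl, Or.inl ⟨h1, h⟩⟩)))
      · exact Or.inl (Or.inr (Or.inl ⟨rfl, Or.inr h2⟩))
    rw [μhalf_prob]
    by_cases h1 : (1 : Fin 5) ∈ relImage (QR C Q) T' <;>
      by_cases h2 : (2 : Fin 5) ∈ relImage (QR C Q) T'
    · rw [if_pos h1, if_pos h2]
      have := prob_le_one γ T'
      linarith
    · rw [if_pos h1, if_neg h2]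
      have hQle := hlift T' hT'
      rw [μhalf_prob] at hQle
      have hno2 : (2 : Fin 5) ∉ relImage Q T' := by
        rintro ⟨c', hc'T, hc'Q⟩
        exact h2 ⟨c', hc'T, Or.inr (Or.inr (Or.inl ⟨rfl, Or.inr hc'Q⟩))⟩
      rw [if_neg hno2] at hQle
      split_ifs at hQle <;> linarith
    · rw [if_neg h1, if_pos h2]
      have hQle := hlift T' hT'
      rw [μhalf_prob] at hQle
      have hno2 : (2 : Fin 5) ∉ relImage Q T' := by
        rintro ⟨c', hc'T, hc'Q⟩
        exact h1 ⟨c', hc'T, Or.inr (Or.inl ⟨rfl, Or.inr hc'Q⟩)⟩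
      rw [if_neg hno2] at hQle
      split_ifs at hQle <;> linarith
    · rw [if_neg h1, if_neg h2]
      have hem : T' = ∅ := by
        rw [Set.eq_empty_iff_forall_notMem]
        intro c' hc'
        rcases himg c' hc' with h | h
        · exact h1 ⟨c', hc', h⟩
        · exact h2 ⟨c', hc', h⟩
      rw [hem, prob_empty]
      norm_num
  · -- r = 1
    rcases hc with ⟨hq, hz⟩ | hq2
    · obtain ⟨μ2, hμ2, -⟩ := hQ c 1 hq a γ hγ
      obtain ⟨ha, -⟩ := Ltrans1 a μ2 hμ2
      subst ha
      exact ⟨FDist.dirac 3, Rmem_y3, liftRel_dirac_mono (hz γ hγ)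
        (fun c' h => Or.inr (Or.inr (Or.inr (Or.inl ⟨rfl, h⟩))))⟩
    · obtain ⟨μ2, hμ2, -⟩ := hQ c 2 hq2 a γ hγ
      have hμ2' : μ2 ∈ Ltrans 2 a := hμ2
      rw [Ltrans2] at hμ2'
      exact absurd hμ2' (Set.notMem_empty _)
  · -- r = 2
    rcases hc with ⟨hq, hw⟩ | hq2
    · obtain ⟨μ2, hμ2, -⟩ := hQ c 1 hq a γ hγ
      obtain ⟨ha, -⟩ := Ltrans1 a μ2 hμ2
      subst ha
      exact ⟨FDist.dirac 4, Rmem_y4, liftRel_dirac_mono (hw γ hγ)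
        (fun c' h => Or.inr (Or.inr (Or.inr (Or.inr ⟨rfl, h⟩))))⟩
    · obtain ⟨μ2, hμ2, -⟩ := hQ c 2 hq2 a γ hγ
      have hμ2' : μ2 ∈ Ltrans 2 a := hμ2
      rw [Ltrans2] at hμ2'
      exact absurd hμ2' (Set.notMem_empty _)
  · -- r = 3
    obtain ⟨μ2, hμ2, hlift⟩ := hQ c 3 hc a γ hγ
    obtain ⟨ha, hμ⟩ := Ltrans3 a μ2 hμ2
    subst ha; subst hμ
    exact ⟨FDist.dirac 3, Rmem_z, liftRel_dirac_mono hlift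
      (fun c' h => Or.inr (Or.inr (Or.inr (Or.inl ⟨rfl, h⟩))))⟩
  · -- r = 4
    obtain ⟨μ2, hμ2, hlift⟩ := hQ c 4 hc a γ hγ
    obtain ⟨ha, hμ⟩ := Ltrans4 a μ2 hμ2
    subst ha; subst hμ
    exact ⟨FDist.dirac 4, Rmem_w, liftRel_dirac_mono hlift
      (fun c' h => Or.inr (Or.inr (Or.inr (Or.inr ⟨rfl, h⟩))))⟩
/-- There are a finite LPTS `L` and a finite reactive LPTS `R` with `L ⋠ R`
admitting no reactive counterexample: every reactive `C` with `C ≼ L` also has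
`C ≼ R`. -/
theorem no_reactive_counterexample :
    ∃ (Act T1 T2 : Type) (i1 : Fintype T1) (i2 : Fintype T2)
      (L : @LPTS T1 Act i1) (R : @LPTS T2 Act i2),
      @Reactive T2 Act i2 R ∧
      ¬ @Sim T1 T2 Act i1 i2 L R ∧
      ∀ (T : Type) (i : Fintype T) (C : @LPTS T Act i),
        @Reactive T Act i C →
        @Sim T T1 Act i i1 C L → @Sim T T2 Act i i2 C R := by
  exact ⟨Fin 4, Fin 5, Fin 5, inferInstance, inferInstance, Lsys, Rsys,
    Rsys_reactive, not_sim, fun T i C hre hs => @reactive_sim T i C hre hs⟩
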